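/- (Rigorous core of Theorem 2.) Let σ > 0, let β satisfy 0 < β ≤ 1, let ε satisfy 0 < ε < 1, put d = √(2π·σ²·ln(19/(9β))) · ln(1/(1 − ε)), and let n be a real number with n ≥ 1/(4π·σ²·(ln(1 − ε))²). Then 2·∑_{k=1}^∞ (−1)^{k−1}·e^{-2n·k²·d²} < β. -/

import Mathlib

open Real

private lemma ks_aux (c : ℝ) (hc : 0 < c) :
    (∑' k : ℕ, (-1 : ℝ) ^ k * Real.exp (-(((k : ℝ) + 1) ^ 2 * c))) ≤ Real.exp (-c) := by
  set f : ℕ → ℝ := fun k => Real.exp (-(((k : ℝ) + 1) ^ 2 * c)) with hf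
  have hfa : Antitone f := by
    intro a b hab
    apply Real.exp_le_exp.mpr
    have hcast : (a : ℝ) ≤ b := Nat.cast_le.mpr hab
    have h1 : ((a : ℝ) + 1) ^ 2 ≤ ((b : ℝ) + 1) ^ 2 := by nlinarith
    nlinarith
  have hfsum : Summable fun k => (-1 : ℝ) ^ k * f k := by
    apply Summable.of_norm
    have hgeo : Summable fun k : ℕ => (Real.exp (-c)) ^ k :=
      summable_geometric_of_lt_one (le_of_lt (Real.exp_pos _))
        (Real.exp_lt_one_iff.mpr (by linarith))
    apply Summable.of_nonneg_of_le (fun k => norm_nonneg _) (fun k => ?_) hgeo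
    rw [norm_mul, norm_pow, norm_neg, norm_one, one_pow, one_mul, Real.norm_eq_abs,
      abs_of_pos (Real.exp_pos _), ← Real.exp_nat_mul]
    apply Real.exp_le_exp.mpr
    have hk1 : (k : ℝ) ≤ ((k : ℝ) + 1) ^ 2 := by nlinarith [sq_nonneg ((k : ℝ))]
    nlinarith
  have htend := hfsum.hasSum.tendsto_sum_nat
  have hle := hfa.tendsto_le_alternating_series htend 0
  have h0 : ∑ i ∈ Finset.range (2 * 0 + 1), (-1 : ℝ) ^ i * f i = Real.exp (-c) := by
    simp [hf]
  rw [h0] at hle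
  exact hle

/-- Rigorous core of Theorem 2: with `d = √(2πσ²·ln(19/(9β)))·ln(1/(1-ε))` and
`n ≥ 1/(4πσ²·(ln(1-ε))²)`, the Kolmogorov–Smirnov tail series satisfies
`2∑_{k=1}^∞ (-1)^{k-1} e^{-2n k² d²} < β` (series reindexed over `k : ℕ` via `k ↦ k+1`). -/
theorem ks_tail_lt_beta (σ β ε n : ℝ) (hσ : 0 < σ) (hβ0 : 0 < β) (hβ : β ≤ 1)
    (hε0 : 0 < ε) (hε1 : ε < 1)
    (hn : n ≥ 1 / (4 * π * σ ^ 2 * (Real.log (1 - ε)) ^ 2)) :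
    2 * ∑' k : ℕ, (-1 : ℝ) ^ k *
        Real.exp (-2 * n * ((k : ℝ) + 1) ^ 2 *
          (Real.sqrt (2 * π * σ ^ 2 * Real.log (19 / (9 * β))) *
            Real.log (1 / (1 - ε))) ^ 2) < β := by
  set L : ℝ := Real.log (19 / (9 * β)) with hLdef
  have hπ : (0 : ℝ) < π := Real.pi_pos
  have hL : 0 < L := by
    apply Real.log_pos
    rw [lt_div_iff₀ (by linarith)]
    linarith
  have hA : (0 : ℝ) < 2 * π * σ ^ 2 * L := by positivity
  have hlog1 : Real.log (1 / (1 - ε)) = - Real.log (1 - ε) := by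
    rw [one_div, Real.log_inv]
  have hlogε : Real.log (1 - ε) < 0 :=
    Real.log_neg (by linarith) (by linarith)
  have hlogε2 : (0 : ℝ) < (Real.log (1 - ε)) ^ 2 := pow_two_pos_of_ne_zero hlogε.ne
  set d : ℝ := Real.sqrt (2 * π * σ ^ 2 * L) * Real.log (1 / (1 - ε)) with hddef
  have hd2 : d ^ 2 = 2 * π * σ ^ 2 * L * (Real.log (1 - ε)) ^ 2 := by
    rw [hddef, mul_pow, Real.sq_sqrt hA.le, hlog1]
    ring
  have hn0 : 0 < n := lt_of_lt_of_le (by positivity) hn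
  have hd2pos : 0 < d ^ 2 := by rw [hd2]; positivity
  have hc : 0 < 2 * n * d ^ 2 := by positivity
  -- the key exponent bound: 2 * n * d^2 ≥ L
  have hkey : L ≤ 2 * n * d ^ 2 := by
    rw [hd2]
    have hP : (0 : ℝ) < 4 * π * σ ^ 2 * (Real.log (1 - ε)) ^ 2 := by positivity
    have h4 : 1 / (4 * π * σ ^ 2 * (Real.log (1 - ε)) ^ 2) *
        (4 * π * σ ^ 2 * (Real.log (1 - ε)) ^ 2) = 1 := by
      exact one_div_mul_cancel hP.ne'
    calc L = L * (1 / (4 * π * σ ^ 2 * (Real.log (1 - ε)) ^ 2) *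
        (4 * π * σ ^ 2 * (Real.log (1 - ε)) ^ 2)) := by rw [h4]; ring
      _ ≤ L * (n * (4 * π * σ ^ 2 * (Real.log (1 - ε)) ^ 2)) := by
          apply mul_le_mul_of_nonneg_left _ hL.le
          exact mul_le_mul_of_nonneg_right hn hP.le
      _ = 2 * n * (2 * π * σ ^ 2 * L * (Real.log (1 - ε)) ^ 2) := by ring
  -- rewrite the sum into the normal form of ks_aux
  have hsum_eq : (∑' k : ℕ, (-1 : ℝ) ^ k * Real.exp (-2 * n * ((k : ℝ) + 1) ^ 2 * d ^ 2))
      = ∑' k : ℕ, (-1 : ℝ) ^ k * Real.exp (-(((k : ℝ) + 1) ^ 2 * (2 * n * d ^ 2))) := by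
    apply tsum_congr
    intro k
    congr 1
    congr 1
    ring
  rw [hsum_eq]
  have haux := ks_aux (2 * n * d ^ 2) hc
  have h1 : Real.exp (-(2 * n * d ^ 2)) ≤ Real.exp (-L) :=
    Real.exp_le_exp.mpr (by linarith)
  have h2 : Real.exp (-L) = 9 * β / 19 := by
    rw [hLdef, ← Real.log_inv, Real.exp_log (by positivity)]
    field_simp
  linarith
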